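/- Fix a dyadic grid 𝒟 on ℝⁿ, a subset 𝓕 ⊆ 𝒟, integers 1 ≤ r ≤ τ, and 0 < ε < 1. For F ∈ 𝓕 let 𝔠_𝓕(F) denote the maximal members of 𝓕 strictly contained in F, and define the good τ-shifted corona 𝒞_F^{good,τ-shift} := {J′ ∈ 𝒟 : J′ is (r,ε)-good, J′ ⋐_{τ,ε} F, and J′ is not (τ,ε)-deeply embedded in any F′ ∈ 𝔠_𝓕(F)}. For I ∈ 𝒟 contained in some member of 𝓕, let π_𝓕^{(0)}I be the smallest member of 𝓕 containing I, and π_𝓕^{(ℓ+1)}I the smallest member of 𝓕 strictly containing π_𝓕^{(ℓ)}I. If I₀ ∈ 𝒟 and F ∈ 𝓕 satisfy I₀ ⊊ F, and there exists J′ ∈ 𝒞_F^{good,τ-shift} with J′ ⊆ I₀, then F = π_𝓕^{(ℓ)}I₀ for some 0 ≤ ℓ ≤ τ. In particular, for each fixed I₀ ∈ 𝒟, the number of F ∈ 𝓕 with I₀ ⊊ F for which some J′ ∈ 𝒞_F^{good,τ-shift} satisfies J′ ⊆ I₀ is at most τ + 1. -/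

import Mathlib

open MeasureTheory
open scoped ENNReal NNReal

noncomputable section

/-- An axis-parallel half-open cube in `ℝⁿ`, given by its corner `a` and side length `l`. -/
structure QCube (n : ℕ) where
  a : Fin n → ℝ
  l : ℝ

/-- The half-open cube as a subset of `ℝⁿ`. -/
def QCube.pts {n : ℕ} (Q : QCube n) : Set (EuclideanSpace ℝ (Fin n)) :=
  {x | ∀ i, Q.a i ≤ x i ∧ x i < Q.a i + Q.l}

/-- The dyadic grid on `ℝⁿ` obtained by translating the standard grid by `t`. -/
def dyadicGrid {n : ℕ} (t : Fin n → ℝ) : Set (QCube n) :=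
  {Q | ∃ (k : ℤ) (m : Fin n → ℤ),
    Q = ⟨fun i => t i + (2:ℝ) ^ (-k) * (m i : ℝ), (2:ℝ) ^ (-k)⟩}

/-- `J ⋐_{r,ε} K` : `J` is `(r,ε)`-deeply embedded in `K`. -/
def deepEmb {n : ℕ} (r : ℕ) (ε : ℝ) (J K : QCube n) : Prop :=
  J.pts ⊆ K.pts ∧ J.l ≤ 2 ^ (-(r : ℝ)) * K.l ∧
    ∀ x ∈ J.pts, ∀ y ∉ K.pts, 1 / 2 * J.l ^ ε * K.l ^ (1 - ε) ≤ dist x y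

/-- A dyadic cube `J` of the grid `t` is `(r,ε)`-good if `J ⋐_{r,ε} I` for every dyadic
cube `I ⊇ J` with `ℓ(J) ≤ 2^{−r} ℓ(I)`. -/
def isGood {n : ℕ} (t : Fin n → ℝ) (r : ℕ) (ε : ℝ) (J : QCube n) : Prop :=
  ∀ I ∈ dyadicGrid t, J.pts ⊆ I.pts → J.l ≤ 2 ^ (-(r : ℝ)) * I.l → deepEmb r ε J I

/-- `𝔠_𝓕(F)`: the maximal members of `𝓕` strictly contained in `F`. -/
def FChildren {n : ℕ} (F𝓕 : Set (QCube n)) (F : QCube n) : Set (QCube n) :=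
  {G | G ∈ F𝓕 ∧ G.pts ⊂ F.pts ∧
    ∀ H ∈ F𝓕, H.pts ⊂ F.pts → G.pts ⊆ H.pts → H.pts ⊆ G.pts}

/-- The good `τ`-shifted corona `𝒞_F^{good,τ-shift}`: the `(r,ε)`-good dyadic cubes `J'`
with `J' ⋐_{τ,ε} F` which are not `(τ,ε)`-deeply embedded in any `𝓕`-child of `F`. -/
def goodShiftCorona {n : ℕ} (t : Fin n → ℝ) (r τ : ℕ) (ε : ℝ)
    (F𝓕 : Set (QCube n)) (F : QCube n) : Set (QCube n) :=
  {J | J ∈ dyadicGrid t ∧ isGood t r ε J ∧ deepEmb τ ε J F ∧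
    ∀ F' ∈ FChildren F𝓕 F, ¬ deepEmb τ ε J F'}

/-- `F` is the smallest member of `𝓕` containing `I`. -/
def IsMinContain {n : ℕ} (F𝓕 : Set (QCube n)) (I F : QCube n) : Prop :=
  F ∈ F𝓕 ∧ I.pts ⊆ F.pts ∧ ∀ F' ∈ F𝓕, I.pts ⊆ F'.pts → F.pts ⊆ F'.pts

/-- `F` is the smallest member of `𝓕` strictly containing `I`. -/
def IsMinStrictContain {n : ℕ} (F𝓕 : Set (QCube n)) (I F : QCube n) : Prop :=
  F ∈ F𝓕 ∧ I.pts ⊂ F.pts ∧ ∀ F' ∈ F𝓕, I.pts ⊂ F'.pts → F.pts ⊆ F'.pts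

/-- `F = π_𝓕^{(ℓ)} I`: `F` is the `ℓ`-fold iterated minimal `𝓕`-parent of `I`. -/
def IsPiF {n : ℕ} (F𝓕 : Set (QCube n)) (I : QCube n) : ℕ → QCube n → Prop
  | 0, F => IsMinContain F𝓕 I F
  | ℓ + 1, F => ∃ G, IsPiF F𝓕 I ℓ G ∧ IsMinStrictContain F𝓕 G F
namespace Helper
variable {n : ℕ} {t : Fin n → ℝ}

lemma l_pos {Q : QCube n} (hQ : Q ∈ dyadicGrid t) : 0 < Q.l := by
  obtain ⟨k, m, rfl⟩ := hQ; exact zpow_pos (by norm_num) _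

lemma corner_mem {Q : QCube n} (hQ : Q ∈ dyadicGrid t) :
    (WithLp.toLp 2 Q.a : EuclideanSpace ℝ (Fin n)) ∈ Q.pts :=
  fun i => ⟨le_refl _, by show Q.a i < Q.a i + Q.l; linarith [l_pos hQ]⟩

lemma pts_nonempty {Q : QCube n} (hQ : Q ∈ dyadicGrid t) : Q.pts.Nonempty :=
  ⟨_, corner_mem hQ⟩

/-- 1-D dyadic nestedness. -/
lemma ico_nested {s : ℝ} {k k' : ℤ} {m m' : ℤ}
    (hk : k' ≤ k)
    (hne : (Set.Ico (s + (2:ℝ)^(-k) * m) (s + (2:ℝ)^(-k) * m + (2:ℝ)^(-k)) ∩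
      Set.Ico (s + (2:ℝ)^(-k') * m') (s + (2:ℝ)^(-k') * m' + (2:ℝ)^(-k'))).Nonempty) :
    Set.Ico (s + (2:ℝ)^(-k) * m) (s + (2:ℝ)^(-k) * m + (2:ℝ)^(-k)) ⊆
      Set.Ico (s + (2:ℝ)^(-k') * m') (s + (2:ℝ)^(-k') * m' + (2:ℝ)^(-k')) := by
  obtain ⟨x, ⟨hx1, hx2⟩, ⟨hx3, hx4⟩⟩ := hne
  set h : ℝ := (2:ℝ)^(-k)
  set H : ℝ := (2:ℝ)^(-k')
  have hpos : 0 < h := zpow_pos (by norm_num) _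
  have hHpos : 0 < H := zpow_pos (by norm_num) _
  -- a - b = h * j for an integer j
  have hHh : H = h * (2:ℝ)^(k - k') := by
    rw [← zpow_add₀ (by norm_num : (2:ℝ) ≠ 0)]; ring_nf; rfl
  set j : ℤ := m - 2^((k - k').toNat) * m' with hj
  have htn : ((k - k').toNat : ℤ) = k - k' := Int.toNat_of_nonneg (by omega)
  have hHh2 : H = h * (2:ℝ)^((k - k').toNat) := by
    rw [hHh, ← zpow_natCast, htn]
  have hdiff : (s + h * m) - (s + H * m') = h * (j : ℝ) := by
    push_cast [hj]
    rw [hHh2]; push_cast; ring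
  -- from intersection: j > -1 and h*j < H
  have hjge : (0:ℝ) ≤ (j:ℝ) := by
    by_contra hneg
    push_neg at hneg
    have hz : (j:ℝ) < 0 := hneg
    have hzi : j < 0 := by exact_mod_cast hz
    have : (j:ℝ) + 1 ≤ 0 := by exact_mod_cast (by omega : j + 1 ≤ 0)
    nlinarith
  have hprod : 0 ≤ h * (j:ℝ) := mul_nonneg hpos.le hjge
  have hjlt : (j:ℝ) * h < H := by nlinarith
  have hfit : h * ((j:ℝ) + 1) ≤ H := by
    rw [hHh2]
    have : (j:ℝ) < (2:ℝ)^((k-k').toNat) := by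
      have h3 := hjlt
      rw [hHh2] at h3
      nlinarith
    have hz : j < 2^((k-k').toNat) := by exact_mod_cast this
    have : (j:ℝ) + 1 ≤ ((2:ℤ)^((k-k').toNat) : ℝ) := by exact_mod_cast hz
    push_cast at this ⊢
    nlinarith
  intro x' ⟨hx'1, hx'2⟩
  constructor
  · nlinarith
  · nlinarith

/-- coordinate interval inclusion from pts inclusion -/
lemma coord_subset {Q Q' : QCube n} (hQ : Q ∈ dyadicGrid t)
    (hsub : Q.pts ⊆ Q'.pts) (i : Fin n) :
    Set.Ico (Q.a i) (Q.a i + Q.l) ⊆ Set.Ico (Q'.a i) (Q'.a i + Q'.l) := by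
  intro y hy
  have hx : (WithLp.toLp 2 (Function.update Q.a i y) : EuclideanSpace ℝ (Fin n)) ∈ Q.pts := by
    intro j
    rcases eq_or_ne j i with rfl | hj
    · simpa [PiLp.toLp_apply, Function.update_self] using hy
    · simp only [PiLp.toLp_apply, Function.update_of_ne hj]
      exact ⟨le_refl _, by linarith [l_pos hQ]⟩
  have := hsub hx i
  simpa [PiLp.toLp_apply, Function.update_self] using this

lemma subset_of_inter_of_le {Q Q' : QCube n} (hQ : Q ∈ dyadicGrid t) (hQ' : Q' ∈ dyadicGrid t)
    (hne : (Q.pts ∩ Q'.pts).Nonempty) (hl : Q.l ≤ Q'.l) : Q.pts ⊆ Q'.pts := by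
  obtain ⟨k, m, rfl⟩ := hQ
  obtain ⟨k', m', rfl⟩ := hQ'
  obtain ⟨x, hx1, hx2⟩ := hne
  have hk : k' ≤ k := by
    by_contra hlt
    push_neg at hlt
    have : (2:ℝ)^(-k') < (2:ℝ)^(-k) :=
      zpow_lt_zpow_right₀ (by norm_num) (by omega)
    simp only at hl
    linarith
  intro y hy i
  have := ico_nested (s := t i) (m := m i) (m' := m' i) hk
    ⟨x i, ⟨(hx1 i).1, (hx1 i).2⟩, ⟨(hx2 i).1, (hx2 i).2⟩⟩ ⟨(hy i).1, (hy i).2⟩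
  exact ⟨this.1, this.2⟩

lemma comparable {Q Q' : QCube n} (hQ : Q ∈ dyadicGrid t) (hQ' : Q' ∈ dyadicGrid t)
    (hne : (Q.pts ∩ Q'.pts).Nonempty) : Q.pts ⊆ Q'.pts ∨ Q'.pts ⊆ Q.pts := by
  rcases le_total Q.l Q'.l with h | h
  · exact Or.inl (subset_of_inter_of_le hQ hQ' hne h)
  · exact Or.inr (subset_of_inter_of_le hQ' hQ (by rwa [Set.inter_comm] at hne) h)

lemma l_le_of_subset (hn : n ≠ 0) {Q Q' : QCube n} (hQ : Q ∈ dyadicGrid t)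
    (hQ' : Q' ∈ dyadicGrid t) (hsub : Q.pts ⊆ Q'.pts) : Q.l ≤ Q'.l := by
  have i : Fin n := ⟨0, Nat.pos_of_ne_zero hn⟩
  have hic := coord_subset hQ hsub i
  set A := Q.a i; set B := Q'.a i
  have hA : A ∈ Set.Ico B (B + Q'.l) := hic ⟨le_refl _, by linarith [l_pos hQ]⟩
  have hend : A + Q.l ≤ B + Q'.l := by
    by_contra hgt
    push_neg at hgt
    have hy : max A (B + Q'.l) ∈ Set.Ico A (A + Q.l) := by
      constructor
      · exact le_max_left _ _
      · exact max_lt (by linarith [l_pos hQ]) hgt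
    have := (hic hy).2
    have := le_max_right A (B + Q'.l)
    linarith
  linarith [hA.1]

lemma pts_eq_of_subset_l_eq {Q Q' : QCube n} (hQ : Q ∈ dyadicGrid t)
    (hsub : Q.pts ⊆ Q'.pts) (hl : Q.l = Q'.l) : Q.pts = Q'.pts := by
  apply Set.Subset.antisymm hsub
  intro x hx i
  have hic := coord_subset hQ hsub i
  have hA : Q.a i ∈ Set.Ico (Q'.a i) (Q'.a i + Q'.l) :=
    hic ⟨le_refl _, by linarith [l_pos hQ]⟩
  have hend : Q.a i + Q.l ≤ Q'.a i + Q'.l := by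
    by_contra hgt
    push_neg at hgt
    have hy : max (Q.a i) (Q'.a i + Q'.l) ∈ Set.Ico (Q.a i) (Q.a i + Q.l) :=
      ⟨le_max_left _ _, max_lt (by linarith [l_pos hQ]) hgt⟩
    have := (hic hy).2
    have := le_max_right (Q.a i) (Q'.a i + Q'.l)
    linarith
  have hae : Q.a i = Q'.a i := by
    have := hA.1
    linarith [hl ▸ hend]
  refine ⟨by rw [hae]; exact (hx i).1, ?_⟩
  have := (hx i).2
  rw [hae, hl]
  linarith

lemma cube_eq_of_pts_eq (hn : n ≠ 0) {Q Q' : QCube n} (hQ : Q ∈ dyadicGrid t)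
    (hQ' : Q' ∈ dyadicGrid t) (he : Q.pts = Q'.pts) : Q = Q' := by
  have hl : Q.l = Q'.l :=
    le_antisymm (l_le_of_subset hn hQ hQ' he.le) (l_le_of_subset hn hQ' hQ he.ge)
  have ha : Q.a = Q'.a := by
    funext i
    have h1 : (WithLp.toLp 2 Q.a : EuclideanSpace ℝ (Fin n)) ∈ Q'.pts := he ▸ corner_mem hQ
    have h2 : (WithLp.toLp 2 Q'.a : EuclideanSpace ℝ (Fin n)) ∈ Q.pts := he ▸ corner_mem hQ'
    have : Q'.a i ≤ Q.a i := (h1 i).1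
    have : Q.a i ≤ Q'.a i := (h2 i).1
    linarith
  cases Q; cases Q'
  simp_all

open Classical in
def scaleOf (Q : QCube n) : ℤ :=
  if h : ∃ k : ℤ, Q.l = (2:ℝ)^(-k) then Classical.choose h else 0

lemma scaleOf_spec {Q : QCube n} (hQ : Q ∈ dyadicGrid t) : Q.l = (2:ℝ)^(-(scaleOf Q)) := by
  have h : ∃ k : ℤ, Q.l = (2:ℝ)^(-k) := by
    obtain ⟨k, m, rfl⟩ := hQ; exact ⟨k, rfl⟩
  classical
  rw [scaleOf, dif_pos h]
  exact Classical.choose_spec h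

lemma scaleOf_le {Q Q' : QCube n} (hQ : Q ∈ dyadicGrid t) (hQ' : Q' ∈ dyadicGrid t)
    (h : Q.l ≤ Q'.l) : scaleOf Q' ≤ scaleOf Q := by
  rw [scaleOf_spec hQ, scaleOf_spec hQ'] at h
  by_contra hlt
  push_neg at hlt
  have : (2:ℝ)^(-(scaleOf Q')) < (2:ℝ)^(-(scaleOf Q)) :=
    zpow_lt_zpow_right₀ (by norm_num) (by omega)
  linarith

lemma l_eq_of_scaleOf_eq {Q Q' : QCube n} (hQ : Q ∈ dyadicGrid t) (hQ' : Q' ∈ dyadicGrid t)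
    (h : scaleOf Q = scaleOf Q') : Q.l = Q'.l := by
  rw [scaleOf_spec hQ, scaleOf_spec hQ', h]

end Helper

namespace Helper
variable {n : ℕ} {t : Fin n → ℝ}

/-- the tower set: members of `𝓕` between `I₀` and (strictly below) `G`. -/
def Tset (F𝓕 : Set (QCube n)) (I₀ G : QCube n) : Set (QCube n) :=
  {H | H ∈ F𝓕 ∧ I₀.pts ⊆ H.pts ∧ H.pts ⊂ G.pts}

lemma rpow_neg_natCast (r : ℕ) : (2:ℝ) ^ (-(r:ℝ)) = (2:ℝ) ^ (-(r:ℤ)) := by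
  have h : (-(r:ℝ)) = ((-(r:ℤ) : ℤ) : ℝ) := by push_cast; ring
  rw [h, Real.rpow_intCast]

section Core
variable (hn : n ≠ 0) {F𝓕 : Set (QCube n)} (h𝓕 : F𝓕 ⊆ dyadicGrid t)
  {I₀ : QCube n} (hI₀ : I₀ ∈ dyadicGrid t)

include hn h𝓕 hI₀

lemma Tset_injOn {G : QCube n} :
    Set.InjOn scaleOf (Tset F𝓕 I₀ G) := by
  intro H1 h1 H2 h2 hsc
  have hl := l_eq_of_scaleOf_eq (h𝓕 h1.1) (h𝓕 h2.1) hsc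
  obtain ⟨x, hx⟩ := pts_nonempty hI₀
  have hcomp := comparable (h𝓕 h1.1) (h𝓕 h2.1) ⟨x, h1.2.1 hx, h2.2.1 hx⟩
  rcases hcomp with hc | hc
  · exact cube_eq_of_pts_eq hn (h𝓕 h1.1) (h𝓕 h2.1) (pts_eq_of_subset_l_eq (h𝓕 h1.1) hc hl)
  · exact (cube_eq_of_pts_eq hn (h𝓕 h2.1) (h𝓕 h1.1)
      (pts_eq_of_subset_l_eq (h𝓕 h2.1) hc hl.symm)).symm

lemma Tset_img {G : QCube n} (hG : G ∈ dyadicGrid t) :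
    scaleOf '' (Tset F𝓕 I₀ G) ⊆ Set.Icc (scaleOf G) (scaleOf I₀) := by
  rintro - ⟨H, hH, rfl⟩
  constructor
  · exact scaleOf_le (h𝓕 hH.1) hG (l_le_of_subset hn (h𝓕 hH.1) hG hH.2.2.1)
  · exact scaleOf_le hI₀ (h𝓕 hH.1) (l_le_of_subset hn hI₀ (h𝓕 hH.1) hH.2.1)

lemma Tset_finite {G : QCube n} (hG : G ∈ dyadicGrid t) :
    (Tset F𝓕 I₀ G).Finite :=
  Set.Finite.of_finite_image
    ((Set.finite_Icc _ _).subset (Tset_img hn h𝓕 hI₀ hG)) (Tset_injOn hn h𝓕 hI₀)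

/-- a maximal element of a nonempty tower set -/
lemma Tset_max {G : QCube n} (hG : G ∈ dyadicGrid t)
    (hne : (Tset F𝓕 I₀ G).Nonempty) :
    ∃ M ∈ Tset F𝓕 I₀ G, ∀ H ∈ Tset F𝓕 I₀ G, H.pts ⊆ M.pts := by
  obtain ⟨M, hM, hmax⟩ := Set.Finite.exists_maximalFor QCube.l _ (Tset_finite hn h𝓕 hI₀ hG) hne
  refine ⟨M, hM, fun H hH => ?_⟩
  obtain ⟨x, hx⟩ := pts_nonempty hI₀
  rcases comparable (h𝓕 hM.1) (h𝓕 hH.1) ⟨x, hM.2.1 hx, hH.2.1 hx⟩ with hc | hc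
  · have hle : M.l ≤ H.l := l_le_of_subset hn (h𝓕 hM.1) (h𝓕 hH.1) hc
    have := le_antisymm hle (hmax hH hle)
    exact (pts_eq_of_subset_l_eq (h𝓕 hM.1) hc this).ge
  · exact hc

/-- the maximal element of the tower below `F` is an `𝓕`-child of `F`. -/
lemma Tset_max_child {F M : QCube n} (hF : F ∈ F𝓕)
    (hM : M ∈ Tset F𝓕 I₀ F) (hmax : ∀ H ∈ Tset F𝓕 I₀ F, H.pts ⊆ M.pts) :
    M ∈ FChildren F𝓕 F := by
  refine ⟨hM.1, hM.2.2, fun H hH hHF hMH => ?_⟩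
  exact hmax H ⟨hH, hM.2.1.trans hMH, hHF⟩

lemma isPiF_card : ∀ (m : ℕ) (G : QCube n), G ∈ F𝓕 → I₀.pts ⊆ G.pts →
    (Tset F𝓕 I₀ G).ncard = m → IsPiF F𝓕 I₀ m G := by
  intro m
  induction m with
  | zero =>
    intro G hG hIG hcard
    have hemp : Tset F𝓕 I₀ G = ∅ :=
      (Set.ncard_eq_zero (Tset_finite hn h𝓕 hI₀ (h𝓕 hG))).mp hcard
    refine ⟨hG, hIG, fun F' hF' hIF' => ?_⟩
    obtain ⟨x, hx⟩ := pts_nonempty hI₀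
    rcases comparable (h𝓕 hF') (h𝓕 hG) ⟨x, hIF' hx, hIG hx⟩ with hc | hc
    · rcases hc.ssubset_or_eq with hss | he
      · have hmem : F' ∈ Tset F𝓕 I₀ G := ⟨hF', hIF', hss⟩
        rw [hemp] at hmem
        exact hmem.elim
      · exact he.ge
    · exact hc
  | succ m ih =>
    intro G hG hIG hcard
    have hfin := Tset_finite hn h𝓕 hI₀ (h𝓕 hG)
    have hne : (Tset F𝓕 I₀ G).Nonempty :=
      Set.nonempty_of_ncard_ne_zero (by omega)
    obtain ⟨M, hM, hmax⟩ := Tset_max hn h𝓕 hI₀ (h𝓕 hG) hne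
    have hTM : Tset F𝓕 I₀ M = Tset F𝓕 I₀ G \ {M} := by
      ext H
      constructor
      · rintro ⟨hH, hIH, hHM⟩
        refine ⟨⟨hH, hIH, hHM.trans hM.2.2⟩, ?_⟩
        simp only [Set.mem_singleton_iff]
        rintro rfl
        exact hHM.ne rfl
      · rintro ⟨⟨hH, hIH, hHG⟩, hne'⟩
        refine ⟨hH, hIH, ?_⟩
        rcases (hmax H ⟨hH, hIH, hHG⟩).ssubset_or_eq with hss | he
        · exact hss
        · exact absurd (cube_eq_of_pts_eq hn (h𝓕 hH) (h𝓕 hM.1) he)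
            (by simpa using hne')
    have hcM : (Tset F𝓕 I₀ M).ncard = m := by
      rw [hTM, Set.ncard_diff_singleton_of_mem hM, hcard]
      omega
    refine ⟨M, ih M hM.1 hM.2.1 hcM, hG, hM.2.2, fun F' hF' hMF' => ?_⟩
    obtain ⟨x, hx⟩ := pts_nonempty hI₀
    rcases comparable (h𝓕 hG) (h𝓕 hF') ⟨x, hIG hx, hMF'.1 (hM.2.1 hx)⟩ with hc | hc
    · exact hc
    · rcases hc.ssubset_or_eq with hss | he
      · have : F' ∈ Tset F𝓕 I₀ G := ⟨hF', hM.2.1.trans hMF'.1, hss⟩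
        exact absurd (ssubset_of_ssubset_of_subset hMF' (hmax F' this)) (ssubset_irrefl _)
      · exact he.ge

lemma minContain_unique {F1 F2 : QCube n}
    (h1 : IsMinContain F𝓕 I₀ F1) (h2 : IsMinContain F𝓕 I₀ F2) : F1 = F2 :=
  cube_eq_of_pts_eq hn (h𝓕 h1.1) (h𝓕 h2.1)
    (Set.Subset.antisymm (h1.2.2 F2 h2.1 h2.2.1) (h2.2.2 F1 h1.1 h1.2.1))

omit hI₀ in
lemma minStrict_unique {G F1 F2 : QCube n}
    (h1 : IsMinStrictContain F𝓕 G F1) (h2 : IsMinStrictContain F𝓕 G F2) : F1 = F2 :=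
  cube_eq_of_pts_eq hn (h𝓕 h1.1) (h𝓕 h2.1)
    (Set.Subset.antisymm (h1.2.2 F2 h2.1 h2.2.1) (h2.2.2 F1 h1.1 h1.2.1))

lemma isPiF_unique : ∀ (ℓ : ℕ) (F1 F2 : QCube n),
    IsPiF F𝓕 I₀ ℓ F1 → IsPiF F𝓕 I₀ ℓ F2 → F1 = F2 := by
  intro ℓ
  induction ℓ with
  | zero => exact fun F1 F2 h1 h2 => minContain_unique hn h𝓕 hI₀ h1 h2
  | succ ℓ ih =>
    rintro F1 F2 ⟨G1, hG1, hs1⟩ ⟨G2, hG2, hs2⟩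
    have := ih G1 G2 hG1 hG2
    subst this
    exact minStrict_unique hn h𝓕 hs1 hs2


lemma exists_pi {r τ : ℕ} {ε : ℝ} (hrτ : r ≤ τ) {F : QCube n}
    (hF : F ∈ F𝓕) (hIF : I₀.pts ⊂ F.pts)
    (hJ : ∃ J ∈ goodShiftCorona t r τ ε F𝓕 F, J.pts ⊆ I₀.pts) :
    ∃ ℓ ≤ τ, IsPiF F𝓕 I₀ ℓ F := by
  set T := Tset F𝓕 I₀ F with hT
  refine ⟨T.ncard, ?_, isPiF_card hn h𝓕 hI₀ T.ncard F hF hIF.1 rfl⟩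
  by_contra hgt
  push_neg at hgt
  obtain ⟨J, ⟨hJg, hgood, hdτ, hnot⟩, hJI⟩ := hJ
  have hne : T.Nonempty := Set.nonempty_of_ncard_ne_zero (by omega)
  obtain ⟨M, hM, hmax⟩ := Tset_max hn h𝓕 hI₀ (h𝓕 hF) hne
  -- scale counting
  set A := scaleOf M with hA
  set B := scaleOf I₀ with hB
  have himg : scaleOf '' T ⊆ Set.Icc A B := by
    rintro - ⟨H, hH, rfl⟩
    refine ⟨?_, ?_⟩
    · exact scaleOf_le (h𝓕 hH.1) (h𝓕 hM.1)
        (l_le_of_subset hn (h𝓕 hH.1) (h𝓕 hM.1) (hmax H hH))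
    · exact scaleOf_le hI₀ (h𝓕 hH.1) (l_le_of_subset hn hI₀ (h𝓕 hH.1) hH.2.1)
  have hcount : T.ncard ≤ (B + 1 - A).toNat := by
    calc T.ncard = (scaleOf '' T).ncard :=
          (Set.ncard_image_of_injOn (Tset_injOn hn h𝓕 hI₀)).symm
      _ ≤ (Set.Icc A B).ncard := Set.ncard_le_ncard himg (Set.finite_Icc _ _)
      _ = (B + 1 - A).toNat := by
          rw [← Finset.coe_Icc, Set.ncard_coe_finset, Int.card_Icc]
  have hAB : (τ:ℤ) ≤ B - A := by omega
  -- length bound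
  have hMl : M.l = (2:ℝ)^(-A) := scaleOf_spec (h𝓕 hM.1)
  have hIl : I₀.l = (2:ℝ)^(-B) := scaleOf_spec hI₀
  have hJl : J.l ≤ I₀.l := l_le_of_subset hn hJg hI₀ hJI
  have hMpos : 0 < M.l := l_pos (h𝓕 hM.1)
  have hlenτ : J.l ≤ (2:ℝ) ^ (-(τ:ℝ)) * M.l := by
    rw [rpow_neg_natCast, hMl, ← zpow_add₀ (by norm_num : (2:ℝ) ≠ 0)]
    calc J.l ≤ I₀.l := hJl
      _ = (2:ℝ)^(-B) := hIl
      _ ≤ (2:ℝ)^(-(τ:ℤ) + -A) :=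
          zpow_le_zpow_right₀ (by norm_num) (by omega)
  have hlenr : J.l ≤ (2:ℝ) ^ (-(r:ℝ)) * M.l := by
    refine hlenτ.trans (mul_le_mul_of_nonneg_right ?_ hMpos.le)
    rw [rpow_neg_natCast, rpow_neg_natCast]
    exact zpow_le_zpow_right₀ (by norm_num) (by omega)
  have hdM : deepEmb r ε J M :=
    hgood M (h𝓕 hM.1) (hJI.trans hM.2.1) hlenr
  exact hnot M (Tset_max_child hn h𝓕 hI₀ hF hM hmax) ⟨hdM.1, hlenτ, hdM.2.2⟩

end Core
end Helper
/-- `τ`-overlap of the good shifted coronas: if `I₀ ∈ 𝒟`, `F ∈ 𝓕`,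
`I₀ ⊊ F`, and some `J' ∈ 𝒞_F^{good,τ-shift}` satisfies `J' ⊆ I₀`, then
`F = π_𝓕^{(ℓ)} I₀` for some `0 ≤ ℓ ≤ τ`; in particular, for each `I₀` there are at most
`τ + 1` such `F ∈ 𝓕`. -/
theorem statement15 (n r τ : ℕ) (ε : ℝ) (hr : 1 ≤ r) (hrτ : r ≤ τ)
    (hε0 : 0 < ε) (hε1 : ε < 1)
    (t : Fin n → ℝ) (F𝓕 : Set (QCube n)) (h𝓕 : F𝓕 ⊆ dyadicGrid t) :
    (∀ I₀ ∈ dyadicGrid t, ∀ F ∈ F𝓕, I₀.pts ⊂ F.pts →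
      (∃ J ∈ goodShiftCorona t r τ ε F𝓕 F, J.pts ⊆ I₀.pts) →
      ∃ ℓ ≤ τ, IsPiF F𝓕 I₀ ℓ F) ∧
    (∀ I₀ ∈ dyadicGrid t,
      {F : QCube n | F ∈ F𝓕 ∧ I₀.pts ⊂ F.pts ∧
        ∃ J ∈ goodShiftCorona t r τ ε F𝓕 F, J.pts ⊆ I₀.pts}.Finite ∧
      {F : QCube n | F ∈ F𝓕 ∧ I₀.pts ⊂ F.pts ∧
        ∃ J ∈ goodShiftCorona t r τ ε F𝓕 F, J.pts ⊆ I₀.pts}.ncard ≤ τ + 1) := by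
  rcases Nat.eq_zero_or_pos n with hn0 | hnpos
  · subst hn0
    have huniv : ∀ Q : QCube 0, Q.pts = Set.univ := fun Q =>
      Set.eq_univ_of_forall (fun x => fun i => i.elim0)
    constructor
    · intro I₀ _ F _ hss _
      rw [huniv I₀, huniv F] at hss
      exact absurd hss (ssubset_irrefl _)
    · intro I₀ _
      have hemp : {F : QCube 0 | F ∈ F𝓕 ∧ I₀.pts ⊂ F.pts ∧
          ∃ J ∈ goodShiftCorona t r τ ε F𝓕 F, J.pts ⊆ I₀.pts} = ∅ := by
        rw [Set.eq_empty_iff_forall_notMem]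
        rintro F ⟨-, hss, -⟩
        rw [huniv I₀, huniv F] at hss
        exact absurd hss (ssubset_irrefl _)
      rw [hemp]
      exact ⟨Set.finite_empty, by simp⟩
  · have hn : n ≠ 0 := hnpos.ne'
    refine ⟨fun I₀ hI₀ F hF hss hJ => Helper.exists_pi hn h𝓕 hI₀ hrτ hF hss hJ, ?_⟩
    intro I₀ hI₀
    set S := {F : QCube n | F ∈ F𝓕 ∧ I₀.pts ⊂ F.pts ∧
      ∃ J ∈ goodShiftCorona t r τ ε F𝓕 F, J.pts ⊆ I₀.pts} with hS
    set f : QCube n → ℕ := fun F => sInf {ℓ | ℓ ≤ τ ∧ IsPiF F𝓕 I₀ ℓ F} with hf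
    have hkey : ∀ F ∈ S, f F ≤ τ ∧ IsPiF F𝓕 I₀ (f F) F := by
      intro F hF
      obtain ⟨ℓ, hℓτ, hpi⟩ := Helper.exists_pi hn h𝓕 hI₀ hrτ hF.1 hF.2.1 hF.2.2
      exact Nat.sInf_mem (⟨ℓ, hℓτ, hpi⟩ :
        {ℓ | ℓ ≤ τ ∧ IsPiF F𝓕 I₀ ℓ F}.Nonempty)
    have hinj : Set.InjOn f S := by
      intro F1 h1 F2 h2 he
      exact Helper.isPiF_unique hn h𝓕 hI₀ (f F1) F1 F2 (hkey F1 h1).2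
        (he ▸ (hkey F2 h2).2)
    have himg : f '' S ⊆ ((Finset.range (τ+1) : Finset ℕ) : Set ℕ) := by
      rintro - ⟨F, hF, rfl⟩
      simp only [Finset.coe_range, Set.mem_Iio]
      exact Nat.lt_succ_of_le (hkey F hF).1
    have hfin : S.Finite := Set.Finite.of_finite_image
      ((Finset.range (τ+1)).finite_toSet.subset himg) hinj
    refine ⟨hfin, ?_⟩
    calc S.ncard = (f '' S).ncard := (Set.ncard_image_of_injOn hinj).symm
      _ ≤ ((Finset.range (τ+1) : Finset ℕ) : Set ℕ).ncard :=
          Set.ncard_le_ncard himg (Finset.finite_toSet _)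
      _ = τ + 1 := by rw [Set.ncard_coe_finset, Finset.card_range]
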